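/- Taylor-expansion error bound for Laplace-type integrals: let m ≥ 1 and N be naturals, c₁, c₂ ≥ 0 reals, and let f : ℝ → ℝ be m-times differentiable on [0, ∞) such that the m-th derivative f^{(m)} is nonnegative and nondecreasing on [0, ∞) and satisfies f^{(m)}(t) ≤ c₁ + c₂ t^N for all t ≥ 0. Then for every λ > 0, | ∫₀^∞ f(t) e^{−λ t} dt − ∑_{j=0}^{m−1} f^{(j)}(0) / λ^{j+1} | ≤ c₁ / λ^{m+1} + c₂ ((N+m)! / m!) / λ^{N+m+1}. In particular, the error is o(1/λ^{m−1}) as λ → ∞. -/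

import Mathlib

open Filter MeasureTheory


open Set Real in

lemma lte_integrableOn (n : ℕ) {lam : ℝ} (hlam : 0 < lam) :
    IntegrableOn (fun t : ℝ => t ^ n * Real.exp (-(lam * t))) (Set.Ioi 0) := by
  have h := integrableOn_rpow_mul_exp_neg_mul_rpow (s := (n : ℝ)) (p := 1)
    (lt_of_lt_of_le neg_one_lt_zero (Nat.cast_nonneg n)) zero_lt_one hlam
  refine h.congr_fun (fun x hx => ?_) measurableSet_Ioi
  dsimp only
  rw [Real.rpow_natCast, Real.rpow_one, neg_mul]

lemma lte_integral (n : ℕ) {lam : ℝ} (hlam : 0 < lam) :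
    ∫ t in Set.Ioi (0:ℝ), t ^ n * Real.exp (-(lam * t))
      = (n.factorial : ℝ) / lam ^ (n + 1) := by
  have h := Real.integral_rpow_mul_exp_neg_mul_Ioi (a := (n : ℝ) + 1) (by positivity) hlam
  rw [setIntegral_congr_fun measurableSet_Ioi
      (g := fun t : ℝ => t ^ ((n : ℝ) + 1 - 1) * Real.exp (-(lam * t)))
      (fun x hx => by simp [Real.rpow_natCast]), h,
    show ((n : ℝ) + 1) = ((n + 1 : ℕ) : ℝ) by push_cast; ring, Real.rpow_natCast]
  push_cast
  rw [Real.Gamma_nat_eq_factorial]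
  rw [one_div, inv_pow]
  ring

open Set Real in

lemma lte_polyderiv (k : ℕ) (c : ℕ → ℝ) (t : ℝ) :
    HasDerivAt (fun x : ℝ => ∑ j ∈ Finset.range (k+1), c j * x ^ j / j.factorial)
      (∑ j ∈ Finset.range k, c (j+1) * t ^ j / j.factorial) t := by
  have h : ∀ j : ℕ, HasDerivAt (fun x : ℝ => c j * x ^ j / j.factorial)
      (c j * (j * t ^ (j-1)) / j.factorial) t := fun j => by
    simpa [mul_div_assoc] using
      (((hasDerivAt_pow j t).const_mul (c j)).div_const (j.factorial : ℝ))
  have hsum := HasDerivAt.fun_sum (fun j (_ : j ∈ Finset.range (k+1)) => h j)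
  refine hsum.congr_deriv ?_
  rw [Finset.sum_range_succ']
  simp only [Nat.cast_zero, zero_mul, mul_zero, zero_div, add_zero, Nat.add_sub_cancel]
  refine Finset.sum_congr rfl (fun j _ => ?_)
  rw [Nat.factorial_succ]
  push_cast
  have h1 : (0:ℝ) < (j.factorial : ℝ) := by exact_mod_cast j.factorial_pos
  field_simp

lemma lte_taylor (m : ℕ) (f : ℕ → ℝ → ℝ)
    (hderiv : ∀ j < m, ∀ t ∈ Set.Ici (0:ℝ),
      HasDerivWithinAt (f j) (f (j+1) t) (Set.Ici 0) t)
    (hnonneg : ∀ t ∈ Set.Ici (0:ℝ), 0 ≤ f m t)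
    (hmono : MonotoneOn (f m) (Set.Ici (0:ℝ)))
    {T : ℝ} (hT : 0 ≤ T) :
    ∀ k, k ≤ m → ∀ t ∈ Set.Icc (0:ℝ) T,
      0 ≤ f (m - k) t - ∑ j ∈ Finset.range k, f (m - k + j) 0 * t ^ j / j.factorial ∧
      f (m - k) t - ∑ j ∈ Finset.range k, f (m - k + j) 0 * t ^ j / j.factorial
        ≤ f m T * t ^ k / k.factorial := by
  intro k
  induction k with
  | zero =>
    intro _ t ht
    simp only [Finset.range_zero, Finset.sum_empty, Nat.sub_zero, sub_zero, pow_zero,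
      Nat.factorial_zero]
    refine ⟨hnonneg t (Set.mem_Ici.2 ht.1), ?_⟩
    simpa using hmono (Set.mem_Ici.2 ht.1) (Set.mem_Ici.2 hT) ht.2
  | succ k ih =>
    intro hk t ht
    have hk' : k ≤ m := Nat.le_of_succ_le hk
    set i := m - (k+1) with hi
    have hms : i + 1 = m - k := by omega
    have hshift : ∀ j : ℕ, i + (j+1) = m - k + j := by omega
    -- the remainder function and its derivative
    set g : ℝ → ℝ := fun x => f i x - ∑ j ∈ Finset.range (k+1), f (i+j) 0 * x ^ j / j.factorial
      with hg
    set G : ℝ → ℝ := fun x =>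
      f (m - k) x - ∑ j ∈ Finset.range k, f (m - k + j) 0 * x ^ j / j.factorial with hG
    have hgderiv : ∀ x ∈ Set.Ici (0:ℝ), HasDerivWithinAt g (G x) (Set.Ici 0) x := by
      intro x hx
      have h1 := hderiv i (by omega) x hx
      have h2 := (lte_polyderiv k (fun j => f (i+j) 0) x).hasDerivWithinAt (s := Set.Ici 0)
      have := h1.fun_sub h2
      rw [hms] at this
      simpa only [hshift] using this
    have hGlow : ∀ x ∈ Set.Icc (0:ℝ) T, 0 ≤ G x := fun x hx => (ih hk' x hx).1
    have hGhigh : ∀ x ∈ Set.Icc (0:ℝ) T, G x ≤ f m T * x ^ k / k.factorial :=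
      fun x hx => (ih hk' x hx).2
    have hg0 : g 0 = 0 := by
      simp only [hg, Finset.sum_range_succ']
      simp
    have hIcc : Set.Icc (0:ℝ) T ⊆ Set.Ici 0 := Set.Icc_subset_Ici_self
    have hgcont : ContinuousOn g (Set.Icc 0 T) :=
      ContinuousOn.mono (fun x hx => (hgderiv x hx).continuousWithinAt) hIcc
    have hint : interior (Set.Icc (0:ℝ) T) = Set.Ioo 0 T := interior_Icc
    have hIoo : Set.Ioo (0:ℝ) T ⊆ Set.Ici 0 := fun x hx => le_of_lt hx.1
    -- lower bound: g is monotone on [0, T]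
    have hgmono : MonotoneOn g (Set.Icc 0 T) := by
      refine monotoneOn_of_hasDerivWithinAt_nonneg (convex_Icc _ _) hgcont
        (f' := G) (fun x hx => ?_) (fun x hx => ?_)
      · rw [hint] at hx ⊢
        exact (hgderiv x (hIoo hx)).mono hIoo
      · rw [hint] at hx
        exact hGlow x (Set.Ioo_subset_Icc_self hx)
    have h0mem : (0:ℝ) ∈ Set.Icc (0:ℝ) T := ⟨le_refl 0, hT⟩
    have hlow : 0 ≤ g t := by
      have := hgmono h0mem ht ht.1
      rwa [hg0] at this
    -- upper bound
    set φ : ℝ → ℝ := fun x => f m T * x ^ (k+1) / (k+1).factorial - g x with hφ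
    have hφderiv : ∀ x ∈ Set.Ici (0:ℝ),
        HasDerivWithinAt φ (f m T * x ^ k / k.factorial - G x) (Set.Ici 0) x := by
      intro x hx
      have hpow : HasDerivAt (fun y : ℝ => f m T * y ^ (k+1) / (k+1).factorial)
          (f m T * x ^ k / k.factorial) x := by
        have := ((hasDerivAt_pow (k+1) x).const_mul (f m T)).div_const
          ((k+1).factorial : ℝ)
        refine this.congr_deriv ?_
        rw [Nat.factorial_succ]
        have h1 : (0:ℝ) < (k.factorial : ℝ) := by exact_mod_cast k.factorial_pos
        push_cast
        field_simp
      exact (hpow.hasDerivWithinAt).sub (hgderiv x hx)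
    have hφcont : ContinuousOn φ (Set.Icc 0 T) :=
      ContinuousOn.mono (fun x hx => (hφderiv x hx).continuousWithinAt) hIcc
    have hφmono : MonotoneOn φ (Set.Icc 0 T) := by
      refine monotoneOn_of_hasDerivWithinAt_nonneg (convex_Icc _ _) hφcont
        (f' := fun x => f m T * x ^ k / k.factorial - G x) (fun x hx => ?_) (fun x hx => ?_)
      · rw [hint] at hx ⊢
        exact (hφderiv x (hIoo hx)).mono hIoo
      · rw [hint] at hx
        exact sub_nonneg.2 (hGhigh x (Set.Ioo_subset_Icc_self hx))
    have hφ0 : φ 0 = 0 := by simp [hφ, hg0]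
    have hhigh : g t ≤ f m T * t ^ (k+1) / (k+1).factorial := by
      have := hφmono h0mem ht ht.1
      rw [hφ0] at this
      simpa [hφ, sub_nonneg] using this
    exact ⟨hlow, hhigh⟩

/-- Taylor-expansion error bound for Laplace-type integrals.  Here `f j` denotes the
`j`-th derivative of the function `f 0` on `[0, ∞)` (encoded by the hypothesis
`hderiv`), with `f m` the `m`-th derivative.  If `f m` is nonnegative, nondecreasing and
satisfies `f m t ≤ c₁ + c₂ t^N` on `[0, ∞)`, then for every `λ > 0`,
`|∫₀^∞ f(t) e^{−λ t} dt − ∑_{j<m} f^{(j)}(0)/λ^{j+1}| ≤ c₁/λ^{m+1} + c₂ ((N+m)!/m!)/λ^{N+m+1}`;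
in particular the error is `o(1/λ^{m−1})` as `λ → ∞`. -/
theorem laplace_taylor_error_bound (m N : ℕ) (hm : 1 ≤ m)
    (c₁ c₂ : ℝ) (hc₁ : 0 ≤ c₁) (hc₂ : 0 ≤ c₂)
    (f : ℕ → ℝ → ℝ)
    (hderiv : ∀ j < m, ∀ t ∈ Set.Ici (0 : ℝ),
      HasDerivWithinAt (f j) (f (j + 1) t) (Set.Ici 0) t)
    (hnonneg : ∀ t ∈ Set.Ici (0 : ℝ), 0 ≤ f m t)
    (hmono : MonotoneOn (f m) (Set.Ici (0 : ℝ)))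
    (hbound : ∀ t ∈ Set.Ici (0 : ℝ), f m t ≤ c₁ + c₂ * t ^ N) :
    (∀ lam : ℝ, 0 < lam →
      |(∫ t in Set.Ioi (0 : ℝ), f 0 t * Real.exp (-(lam * t))) -
          ∑ j ∈ Finset.range m, f j 0 / lam ^ (j + 1)| ≤
        c₁ / lam ^ (m + 1) +
          c₂ * (((N + m).factorial : ℝ) / (m.factorial : ℝ)) / lam ^ (N + m + 1)) ∧
      (fun lam : ℝ =>
          (∫ t in Set.Ioi (0 : ℝ), f 0 t * Real.exp (-(lam * t))) -
            ∑ j ∈ Finset.range m, f j 0 / lam ^ (j + 1)) =o[atTop]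
        fun lam : ℝ => 1 / lam ^ (m - 1) := by
  -- remainder function and its pointwise bounds
  set P : ℝ → ℝ := fun t => ∑ j ∈ Finset.range m, f j 0 * t ^ j / j.factorial with hP
  set g : ℝ → ℝ := fun t => f 0 t - P t with hg
  have hgbounds : ∀ t : ℝ, 0 ≤ t → 0 ≤ g t ∧ g t ≤ (c₁ + c₂ * t ^ N) * t ^ m / m.factorial := by
    intro t ht
    have h := lte_taylor m f hderiv hnonneg hmono ht m le_rfl t ⟨ht, le_refl t⟩
    simp only [Nat.sub_self, zero_add] at h
    refine ⟨h.1, le_trans h.2 ?_⟩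
    have hfac : (0:ℝ) ≤ t ^ m / m.factorial := by positivity
    have := hbound t ht
    calc f m t * t ^ m / m.factorial = f m t * (t ^ m / m.factorial) := by ring
    _ ≤ (c₁ + c₂ * t ^ N) * (t ^ m / m.factorial) := by
        exact mul_le_mul_of_nonneg_right this hfac
    _ = (c₁ + c₂ * t ^ N) * t ^ m / m.factorial := by ring
  have hfmpos : (0:ℝ) < (m.factorial : ℝ) := by exact_mod_cast m.factorial_pos
  -- main bound for each lam
  have key : ∀ lam : ℝ, 0 < lam →
      0 ≤ (∫ t in Set.Ioi (0 : ℝ), f 0 t * Real.exp (-(lam * t))) -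
          ∑ j ∈ Finset.range m, f j 0 / lam ^ (j + 1) ∧
      (∫ t in Set.Ioi (0 : ℝ), f 0 t * Real.exp (-(lam * t))) -
          ∑ j ∈ Finset.range m, f j 0 / lam ^ (j + 1) ≤
        c₁ / lam ^ (m + 1) +
          c₂ * (((N + m).factorial : ℝ) / (m.factorial : ℝ)) / lam ^ (N + m + 1) := by
    intro lam hlam
    set e : ℝ → ℝ := fun t => Real.exp (-(lam * t)) with he
    -- integrability of P * e
    have hPint : IntegrableOn (fun t => P t * e t) (Set.Ioi 0) := by
      have : (fun t => P t * e t) =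
          fun t => ∑ j ∈ Finset.range m, (f j 0 / j.factorial) * (t ^ j * e t) := by
        funext t
        rw [hP, Finset.sum_mul]
        exact Finset.sum_congr rfl fun j _ => by ring
      rw [this]
      exact integrable_finset_sum _ fun j _ => ((lte_integrableOn j hlam).const_mul _)
    have hPval : (∫ t in Set.Ioi (0:ℝ), P t * e t)
        = ∑ j ∈ Finset.range m, f j 0 / lam ^ (j + 1) := by
      have : (fun t => P t * e t) =
          fun t => ∑ j ∈ Finset.range m, (f j 0 / j.factorial) * (t ^ j * e t) := by
        funext t
        rw [hP, Finset.sum_mul]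
        exact Finset.sum_congr rfl fun j _ => by ring
      rw [this, integral_finset_sum _ fun j _ => ((lte_integrableOn j hlam).const_mul _)]
      refine Finset.sum_congr rfl fun j _ => ?_
      rw [integral_const_mul, lte_integral j hlam]
      have hj : (0:ℝ) < (j.factorial : ℝ) := by exact_mod_cast j.factorial_pos
      field_simp
    -- the bounding function B
    set B : ℝ → ℝ := fun t => (c₁ / m.factorial) * (t ^ m * e t)
        + (c₂ / m.factorial) * (t ^ (N + m) * e t) with hB
    have hBint : IntegrableOn B (Set.Ioi 0) :=
      ((lte_integrableOn m hlam).const_mul _).add ((lte_integrableOn (N+m) hlam).const_mul _)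
    have hgB : ∀ t ∈ Set.Ioi (0:ℝ), 0 ≤ g t * e t ∧ g t * e t ≤ B t := by
      intro t ht
      have ht' : (0:ℝ) ≤ t := le_of_lt ht
      have hb := hgbounds t ht'
      have hepos : 0 < e t := Real.exp_pos _
      constructor
      · exact mul_nonneg hb.1 hepos.le
      · calc g t * e t ≤ ((c₁ + c₂ * t ^ N) * t ^ m / m.factorial) * e t :=
              mul_le_mul_of_nonneg_right hb.2 hepos.le
        _ = B t := by simp only [hB, pow_add]; ring
    -- measurability of g * e
    have hgcont : ContinuousOn (fun t => g t * e t) (Set.Ioi 0) := by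
      have hf0 : ContinuousOn (f 0) (Set.Ici 0) := fun t ht =>
        (hderiv 0 hm t ht).continuousWithinAt
      have hPc : Continuous P :=
        continuous_finset_sum _ fun j _ =>
          ((continuous_const.mul (continuous_pow j)).div_const _)
      have hec : Continuous e :=
        Real.continuous_exp.comp ((continuous_const.mul continuous_id).neg)
      exact (((hf0.sub hPc.continuousOn).mono Set.Ioi_subset_Ici_self).mul hec.continuousOn)
    have hgmeas : AEStronglyMeasurable (fun t => g t * e t)
        (volume.restrict (Set.Ioi 0)) := hgcont.aestronglyMeasurable measurableSet_Ioi
    have hgint : IntegrableOn (fun t => g t * e t) (Set.Ioi 0) := by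
      refine Integrable.mono' hBint hgmeas ?_
      refine (ae_restrict_iff' measurableSet_Ioi).2 (ae_of_all _ fun t ht => ?_)
      have := hgB t ht
      rw [Real.norm_eq_abs, abs_of_nonneg this.1]
      exact this.2
    -- split the integral
    have hsplit : (∫ t in Set.Ioi (0:ℝ), f 0 t * e t)
        = (∫ t in Set.Ioi (0:ℝ), P t * e t) + ∫ t in Set.Ioi (0:ℝ), g t * e t := by
      rw [← integral_add hPint hgint]
      refine setIntegral_congr_fun measurableSet_Ioi fun t _ => ?_
      simp only [hg]
      ring
    have herr : (∫ t in Set.Ioi (0 : ℝ), f 0 t * e t) -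
        ∑ j ∈ Finset.range m, f j 0 / lam ^ (j + 1)
        = ∫ t in Set.Ioi (0:ℝ), g t * e t := by
      rw [hsplit, hPval]; ring
    rw [herr]
    constructor
    · exact setIntegral_nonneg measurableSet_Ioi fun t ht => (hgB t ht).1
    · have hle : (∫ t in Set.Ioi (0:ℝ), g t * e t) ≤ ∫ t in Set.Ioi (0:ℝ), B t :=
        setIntegral_mono_on hgint hBint measurableSet_Ioi fun t ht => (hgB t ht).2
      refine le_trans hle ?_
      rw [hB]
      rw [integral_add ((lte_integrableOn m hlam).const_mul _)
        ((lte_integrableOn (N+m) hlam).const_mul _), integral_const_mul, integral_const_mul,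
        lte_integral m hlam, lte_integral (N+m) hlam]
      have h1 : c₁ / m.factorial * ((m.factorial : ℝ) / lam ^ (m + 1)) = c₁ / lam ^ (m+1) := by
        field_simp
      have h2 : c₂ / (m.factorial:ℝ) * (((N+m).factorial : ℝ) / lam ^ (N + m + 1))
          = c₂ * (((N + m).factorial : ℝ) / (m.factorial : ℝ)) / lam ^ (N + m + 1) := by
        field_simp
      rw [h1, h2]
  refine ⟨fun lam hlam => ?_, ?_⟩
  · have h := key lam hlam
    rw [abs_of_nonneg h.1]
    exact h.2
  · -- little-o part
    set E : ℝ → ℝ := fun lam =>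
      (∫ t in Set.Ioi (0 : ℝ), f 0 t * Real.exp (-(lam * t))) -
        ∑ j ∈ Finset.range m, f j 0 / lam ^ (j + 1) with hE
    set K : ℝ := ((N + m).factorial : ℝ) / (m.factorial : ℝ) with hK
    have hbigO : E =O[atTop] fun lam : ℝ => 1 / lam ^ (m + 1) := by
      rw [Asymptotics.isBigO_iff]
      refine ⟨c₁ + c₂ * K, ?_⟩
      filter_upwards [eventually_ge_atTop (1:ℝ)] with lam hlam1
      have hlam : (0:ℝ) < lam := lt_of_lt_of_le zero_lt_one hlam1
      have h := key lam hlam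
      have habs : |E lam| ≤ c₁ / lam ^ (m + 1) + c₂ * K / lam ^ (N + m + 1) := by
        rw [abs_of_nonneg h.1]; exact h.2
      have hmono2 : c₂ * K / lam ^ (N + m + 1) ≤ c₂ * K / lam ^ (m + 1) := by
        apply div_le_div_of_nonneg_left _ (by positivity) _
        · positivity
        · exact pow_le_pow_right₀ hlam1 (by omega)
      rw [Real.norm_eq_abs, Real.norm_eq_abs]
      have : |1 / lam ^ (m+1)| = 1 / lam ^ (m+1) := abs_of_nonneg (by positivity)
      rw [this]
      calc |E lam| ≤ c₁ / lam ^ (m + 1) + c₂ * K / lam ^ (m + 1) :=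
            le_trans habs (by linarith)
      _ = (c₁ + c₂ * K) * (1 / lam ^ (m + 1)) := by ring
    have hlittleo : (fun lam : ℝ => 1 / lam ^ (m + 1)) =o[atTop]
        fun lam : ℝ => 1 / lam ^ (m - 1) := by
      have h2 : (fun lam : ℝ => 1 / lam ^ 2) =o[atTop] (fun _ : ℝ => (1:ℝ)) := by
        rw [Asymptotics.isLittleO_one_iff]
        have hp : Tendsto (fun lam : ℝ => lam ^ 2) atTop atTop :=
          tendsto_pow_atTop (by norm_num)
        have := hp.inv_tendsto_atTop
        simpa [one_div, Pi.inv_def] using this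
      have := (Asymptotics.isBigO_refl (fun lam : ℝ => 1 / lam ^ (m-1)) atTop).mul_isLittleO h2
      refine this.congr' ?_ ?_
      · filter_upwards [eventually_gt_atTop (0:ℝ)] with lam hlam
        have : m - 1 + 2 = m + 1 := by omega
        rw [div_mul_div_comm, one_mul, ← pow_add, this]
      · filter_upwards with lam
        rw [mul_one]
    exact hbigO.trans_isLittleO hlittleo
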